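/- arXiv:2209.07452 — 5 statements merged into one kernel-verified Lean document; each statement's English description precedes it below -/
import Mathlib

section
/- Let G = (√5+1)/2, let T : [0,1/2] → [0,1/2] be the folded NICF map T(x) = |1/x - ⌊1/x + 1/2⌋| (with T(0)=0), and let μ be the measure on [0,1/2] with density h(x)/(log G) where h(x) = 1/(G+x) + 1/(G+1-x). Then μ is T-invariant: μ(T⁻¹(E)) = μ(E) for every Borel set E ⊆ [0,1/2]. -/
open MeasureTheory

noncomputable def foldedNICF (x : ℝ) : ℝ :=
  if x = 0 then 0 else |1 / x - ⌊1 / x + 1 / 2⌋|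

noncomputable def nicfMeasure : Measure ℝ :=
  (volume.restrict (Set.Icc (0 : ℝ) (1 / 2))).withDensity
    (fun x => ENNReal.ofReal
      ((1 / ((Real.sqrt 5 + 1) / 2 + x) + 1 / ((Real.sqrt 5 + 1) / 2 + 1 - x)) /
        Real.log ((Real.sqrt 5 + 1) / 2)))

open Set Real Filter

noncomputable def Gr : ℝ := (Real.sqrt 5 + 1) / 2

lemma sqrt5_lt : (2:ℝ) < Real.sqrt 5 := by
  have : (2:ℝ) = Real.sqrt 4 := by
    rw [show (4:ℝ) = 2^2 by norm_num, Real.sqrt_sq (by norm_num)]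
  rw [this]
  exact Real.sqrt_lt_sqrt (by norm_num) (by norm_num)

lemma sqrt5_lt' : Real.sqrt 5 < 3 := by
  have : (3:ℝ) = Real.sqrt 9 := by
    rw [show (9:ℝ) = 3^2 by norm_num, Real.sqrt_sq (by norm_num)]
  rw [this]
  exact Real.sqrt_lt_sqrt (by norm_num) (by norm_num)

lemma Gr_gt : (3/2 : ℝ) < Gr := by
  have := sqrt5_lt; unfold Gr; linarith

lemma Gr_lt : Gr < 2 := by
  have := sqrt5_lt'; unfold Gr; linarith

lemma Gr_sq : Gr ^ 2 = Gr + 1 := by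
  have h5 : Real.sqrt 5 ^ 2 = 5 := Real.sq_sqrt (by norm_num)
  unfold Gr; ring_nf; nlinarith [h5]

lemma logGr_pos : 0 < Real.log Gr := Real.log_pos (by have := Gr_gt; linarith)

noncomputable def Hf (x : ℝ) : ℝ := Real.log (Gr + x) - Real.log (Gr + 1 - x)

noncomputable def hd (x : ℝ) : ℝ := 1 / (Gr + x) + 1 / (Gr + 1 - x)

lemma hd_deriv {x : ℝ} (hx1 : -1 ≤ x) (hx2 : x ≤ 1) : HasDerivAt Hf (hd x) x := by
  have hG := Gr_gt
  have h1 : (0:ℝ) < Gr + x := by linarith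
  have h2 : (0:ℝ) < Gr + 1 - x := by linarith
  have d1 : HasDerivAt (fun y : ℝ => Real.log (Gr + y)) (1 / (Gr + x)) x := by
    have : HasDerivAt (fun y : ℝ => Gr + y) 1 x := (hasDerivAt_id x).const_add Gr
    simpa [one_div] using (this.log h1.ne')
  have d2 : HasDerivAt (fun y : ℝ => Real.log (Gr + 1 - y)) (-(1 / (Gr + 1 - x))) x := by
    have : HasDerivAt (fun y : ℝ => Gr + 1 - y) (-1) x := by
      simpa using ((hasDerivAt_id x).const_sub (Gr + 1))
    have := this.log h2.ne'
    simpa [one_div, neg_div] using this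
  have := d1.sub d2
  have e : Hf = (fun y : ℝ => Real.log (Gr + y)) - (fun y : ℝ => Real.log (Gr + 1 - y)) := rfl
  rw [e]
  simpa [hd, sub_neg_eq_add] using this

lemma hd_cont : ContinuousOn hd (Icc (-1 : ℝ) 1) := by
  have hG := Gr_gt
  apply ContinuousOn.add
  · apply ContinuousOn.div continuousOn_const (by fun_prop)
    intro x hx; simp only [mem_Icc] at hx; intro h; linarith [hx.1]
  · apply ContinuousOn.div continuousOn_const (by fun_prop)
    intro x hx; simp only [mem_Icc] at hx; intro h; linarith [hx.2]

lemma hd_integral {u v : ℝ} (hu : -1 ≤ u) (huv : u ≤ v) (hv : v ≤ 1) :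
    ∫ x in u..v, hd x = Hf v - Hf u := by
  apply intervalIntegral.integral_eq_sub_of_hasDerivAt
  · intro x hx
    rw [uIcc_of_le huv] at hx
    exact hd_deriv (le_trans hu hx.1) (le_trans hx.2 hv)
  · apply ContinuousOn.intervalIntegrable
    apply hd_cont.mono
    rw [uIcc_of_le huv]
    exact Icc_subset_Icc hu hv

lemma hd_nonneg {x : ℝ} (hx1 : -1 ≤ x) (hx2 : x ≤ 1) : 0 ≤ hd x := by
  have hG := Gr_gt
  have h1 : (0:ℝ) < Gr + x := by linarith
  have h2 : (0:ℝ) < Gr + 1 - x := by linarith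
  unfold hd; positivity

lemma nicf_apply {s : Set ℝ} (hs : MeasurableSet s) :
    nicfMeasure s = ∫⁻ x in s ∩ Icc (0:ℝ) (1/2), ENNReal.ofReal (hd x / Real.log Gr) := by
  unfold nicfMeasure
  rw [withDensity_apply _ hs, Measure.restrict_restrict hs]
  rfl

lemma nicf_Icc {u v : ℝ} (hu : 0 ≤ u) (huv : u ≤ v) (hv : v ≤ 1/2) :
    nicfMeasure (Icc u v) = ENNReal.ofReal ((Hf v - Hf u) / Real.log Gr) := by
  rw [nicf_apply measurableSet_Icc,
    inter_eq_self_of_subset_left (Icc_subset_Icc hu hv)]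
  have hsub : Icc u v ⊆ Icc (-1:ℝ) 1 := Icc_subset_Icc (by linarith) (by linarith)
  have hint : IntegrableOn (fun x => hd x / Real.log Gr) (Icc u v) volume := by
    exact ((hd_cont.mono hsub).div_const _).integrableOn_Icc
  rw [← ofReal_integral_eq_lintegral_ofReal hint]
  · congr 1
    rw [MeasureTheory.integral_Icc_eq_integral_Ioc, ← intervalIntegral.integral_of_le huv,
      intervalIntegral.integral_div, hd_integral (by linarith) huv (by linarith)]
  · filter_upwards [ae_restrict_mem measurableSet_Icc] with x hx
    exact div_nonneg (hd_nonneg (by linarith [hx.1]) (by linarith [hx.2])) logGr_pos.le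

lemma foldedNICF_measurable : Measurable foldedNICF := by
  unfold foldedNICF
  have h0 : MeasurableSet {x : ℝ | x = 0} := by
    simp only [Set.setOf_eq_eq_singleton]
    exact measurableSet_singleton 0
  refine Measurable.ite h0 measurable_const ?_
  exact ((measurable_const.div measurable_id).sub
    (measurable_from_top.comp ((measurable_const.div measurable_id).add measurable_const).floor)).abs

lemma foldedNICF_nonneg (x : ℝ) : 0 ≤ foldedNICF x := by
  unfold foldedNICF; split <;> [rfl; exact abs_nonneg _]

lemma foldedNICF_le (x : ℝ) : foldedNICF x ≤ 1/2 := by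
  unfold foldedNICF
  split
  · norm_num
  · rw [abs_le]
    constructor
    · have := Int.floor_le (1/x + 1/2); linarith
    · have := Int.lt_floor_add_one (1/x + 1/2); linarith

lemma Hf_half : Hf (1/2) = 0 := by
  unfold Hf; ring_nf

lemma Hf_zero : Hf 0 = -Real.log Gr := by
  unfold Hf
  rw [show Gr + 1 - 0 = Gr^2 by rw [Gr_sq]; ring, Real.log_pow]
  push_cast; ring

lemma Hf_mono {u v : ℝ} (h0 : -1 ≤ u) (huv : u ≤ v) (hv : v ≤ 1) : Hf u ≤ Hf v := by
  have hG := Gr_gt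
  unfold Hf
  have h1 : (0:ℝ) < Gr + u := by linarith
  have h2 : (0:ℝ) < Gr + 1 - v := by linarith
  have := Real.log_le_log h1 (by linarith : Gr + u ≤ Gr + v)
  have := Real.log_le_log h2 (by linarith : Gr + 1 - v ≤ Gr + 1 - u)
  linarith

lemma Hfinv {y : ℝ} (hy : 3/2 ≤ y) :
    Hf (1/y) = -Real.log Gr + Real.log (y + Gr - 1) - Real.log (y + Gr - 2) := by
  have hG := Gr_gt
  have hG2 := Gr_lt
  have hy0 : (0:ℝ) < y := by linarith
  have h1 : (0:ℝ) < y + Gr - 1 := by linarith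
  have h2 : (0:ℝ) < y + Gr - 2 := by linarith
  have hGr0 : (0:ℝ) < Gr := by linarith
  have e1 : Gr + 1/y = Gr * (y + Gr - 1) / y := by
    field_simp
    nlinarith [Gr_sq]
  have e2 : Gr + 1 - 1/y = Gr^2 * (y + Gr - 2) / y := by
    field_simp
    nlinarith [Gr_sq]
  unfold Hf
  rw [e1, e2, Real.log_div (by positivity) hy0.ne', Real.log_div (by positivity) hy0.ne',
    Real.log_mul hGr0.ne' h1.ne', Real.log_mul (by positivity) h2.ne', Real.log_pow]
  push_cast; ring

noncomputable def cseq (a : ℝ) (n : ℕ) : ℝ :=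
  Hf (min (1/(n+2-a)) (1/2)) - Hf (1/(n+2+a))

noncomputable def bseq (a : ℝ) (n : ℕ) : ℝ :=
  Real.log (n + Gr - a) - Real.log (n + Gr + a)

section
variable {a : ℝ} (ha0 : 0 ≤ a) (ha : a < 1/2)
include ha0 ha

lemma cseq_nonneg (n : ℕ) : 0 ≤ cseq a n := by
  have hn : (0:ℝ) ≤ n := Nat.cast_nonneg n
  have h1 : (0:ℝ) < n + 2 - a := by linarith
  have h2 : (0:ℝ) < n + 2 + a := by linarith
  have hu1 : 1/((n:ℝ)+2+a) ≤ 1/(n+2-a) := by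
    apply one_div_le_one_div_of_le h1; linarith
  have hu2 : 1/((n:ℝ)+2+a) ≤ 1/2 := by
    rw [div_le_div_iff₀ h2 (by norm_num)]; linarith
  have hw : min (1/((n:ℝ)+2-a)) (1/2) ≤ 1/2 := min_le_right _ _
  have hupos : (0:ℝ) < 1/((n:ℝ)+2+a) := by positivity
  unfold cseq
  have : 1/((n:ℝ)+2+a) ≤ min (1/((n:ℝ)+2-a)) (1/2) := le_min hu1 hu2
  exact sub_nonneg.mpr (Hf_mono (by linarith) this (by linarith))

lemma cseq_succ (n : ℕ) : cseq a (n+1) = bseq a (n+2) - bseq a (n+1) := by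
  have hn : (0:ℝ) ≤ n := Nat.cast_nonneg n
  have hmin : min (1/((n:ℝ)+1+2-a)) (1/2) = 1/((n:ℝ)+1+2-a) := by
    apply min_eq_left
    rw [div_le_div_iff₀ (by linarith) (by norm_num)]; linarith
  unfold cseq
  push_cast
  rw [hmin, Hfinv (by linarith), Hfinv (by linarith)]
  unfold bseq
  push_cast
  ring_nf

lemma cseq_zero : cseq a 0 = Hf a + Real.log Gr + bseq a 1 := by
  have h2a : (3:ℝ)/2 ≤ 2 + a := by linarith
  unfold cseq bseq
  push_cast
  have hmin : min (1/((0:ℝ)+2-a)) (1/2) = 1/2 := by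
    apply min_eq_right
    rw [div_le_div_iff₀ (by norm_num) (by linarith)]
    linarith
  rw [hmin, show (0:ℝ)+2+a = 2+a by ring, Hfinv h2a, Hf_half]
  unfold Hf
  ring_nf
end

section
variable {a : ℝ} (ha0 : 0 ≤ a) (ha : a < 1/2)
include ha0 ha

lemma cseq_partial (N : ℕ) :
    ∑ n ∈ Finset.range (N+1), cseq a n = Hf a + Real.log Gr + bseq a (N+1) := by
  induction N with
  | zero => simpa using cseq_zero ha0 ha
  | succ N ih =>
    rw [Finset.sum_range_succ, ih, cseq_succ ha0 ha]
    ring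

lemma bseq_tendsto : Tendsto (fun n : ℕ => bseq a n) atTop (nhds 0) := by
  have hG := Gr_gt
  have heq : ∀ n : ℕ, bseq a n = Real.log ((n + Gr - a)/(n + Gr + a)) := by
    intro n
    have hn : (0:ℝ) ≤ n := Nat.cast_nonneg n
    rw [Real.log_div (by intro h; nlinarith) (by intro h; nlinarith)]
    rfl
  have hrat : Tendsto (fun n : ℕ => ((n:ℝ) + Gr - a)/((n:ℝ) + Gr + a)) atTop (nhds 1) := by
    have hden : Tendsto (fun n : ℕ => (n:ℝ) + Gr + a) atTop atTop :=
      tendsto_atTop_add_const_right _ (Gr + a) tendsto_natCast_atTop_atTop |>.congr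
        (fun n => by ring)
    have h0 : Tendsto (fun n : ℕ => (2*a)/((n:ℝ) + Gr + a)) atTop (nhds 0) :=
      Tendsto.div_atTop tendsto_const_nhds hden
    have : Tendsto (fun n : ℕ => 1 - (2*a)/((n:ℝ) + Gr + a)) atTop (nhds 1) := by
      simpa using tendsto_const_nhds.sub h0
    apply this.congr
    intro n
    have hn : (0:ℝ) ≤ n := Nat.cast_nonneg n
    have hden0 : ((n:ℝ) + Gr + a) ≠ 0 := by intro h; nlinarith
    field_simp
    ring
  have hlog : Tendsto (fun n : ℕ => Real.log (((n:ℝ) + Gr - a)/((n:ℝ) + Gr + a)))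
      atTop (nhds 0) := by
    have := (Real.continuousAt_log one_ne_zero).tendsto.comp hrat
    simpa [Function.comp_def] using this
  exact hlog.congr (fun n => (heq n).symm)

lemma cseq_hasSum : HasSum (cseq a) (Hf a + Real.log Gr) := by
  rw [hasSum_iff_tendsto_nat_of_nonneg (cseq_nonneg ha0 ha) _]
  rw [← tendsto_add_atTop_iff_nat 1]
  have heq : (fun N => ∑ n ∈ Finset.range (N+1), cseq a n)
      = fun N => Hf a + Real.log Gr + bseq a (N+1) := funext (cseq_partial ha0 ha)
  rw [heq]
  have : Tendsto (fun N : ℕ => bseq a (N+1)) atTop (nhds 0) :=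
    (tendsto_add_atTop_iff_nat 1).mpr (bseq_tendsto ha0 ha)
  simpa using tendsto_const_nhds.add this
end

lemma nicf_inter {s : Set ℝ} (hs : MeasurableSet s) :
    nicfMeasure s = nicfMeasure (s ∩ Icc (0:ℝ) (1/2)) := by
  rw [nicf_apply hs, nicf_apply (hs.inter measurableSet_Icc), inter_assoc, inter_self]

lemma nicf_singleton : nicfMeasure {(0:ℝ)} = 0 := by
  rw [nicf_apply (measurableSet_singleton 0)]
  apply setLIntegral_measure_zero
  apply measure_mono_null (inter_subset_left) (measure_singleton 0)

noncomputable def Sset (a : ℝ) (n : ℕ) : Set ℝ :=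
  Icc (1/((n:ℝ)+2+a)) (min (1/((n:ℝ)+2-a)) (1/2))

section
variable {a : ℝ} (ha0 : 0 ≤ a) (ha : a < 1/2)
include ha0 ha

lemma Sset_decomp :
    foldedNICF ⁻¹' (Iic a) ∩ Icc (0:ℝ) (1/2) = {0} ∪ ⋃ n, Sset a n := by
  ext x
  simp only [mem_inter_iff, mem_preimage, mem_Iic, mem_Icc, mem_union, mem_singleton_iff,
    mem_iUnion, Sset, mem_Icc]
  constructor
  · rintro ⟨hTx, hx0, hx2⟩
    rcases eq_or_lt_of_le hx0 with h | hxpos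
    · exact Or.inl h.symm
    right
    have hy2 : 2 ≤ 1/x := by
      rw [le_div_iff₀ hxpos]; linarith
    have hTx' : |1/x - ⌊1/x + 1/2⌋| ≤ a := by
      unfold foldedNICF at hTx
      rw [if_neg (ne_of_gt hxpos)] at hTx
      exact hTx
    set n0 : ℤ := ⌊1/x + 1/2⌋ with hn0
    have hn02 : 2 ≤ n0 := by
      rw [hn0]
      apply Int.le_floor.mpr
      push_cast; linarith
    rw [abs_le] at hTx'
    obtain ⟨hl, hr⟩ := hTx'
    refine ⟨(n0 - 2).toNat, ?_, ?_⟩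
    · have hcast : (((n0 - 2).toNat : ℕ) : ℝ) = (n0:ℝ) - 2 := by
        have h2c : ((((n0 - 2).toNat : ℕ) : ℤ) : ℝ) = ((n0 - 2 : ℤ) : ℝ) := by
          congr 1
          omega
        push_cast at h2c
        linarith
      rw [hcast]
      have hn0r : (2:ℝ) ≤ (n0:ℝ) := by exact_mod_cast hn02
      have hden : (0:ℝ) < (n0:ℝ) - 2 + 2 + a := by linarith
      rw [div_le_iff₀ hden]
      have h1x : 1/x ≤ (n0:ℝ) + a := by linarith
      calc (1:ℝ) = x * (1/x) := by field_simp
      _ ≤ x * ((n0:ℝ) + a) := by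
          apply mul_le_mul_of_nonneg_left h1x hx0
      _ = x * ((n0:ℝ) - 2 + 2 + a) := by ring
    · have hcast : (((n0 - 2).toNat : ℕ) : ℝ) = (n0:ℝ) - 2 := by
        have h2c : ((((n0 - 2).toNat : ℕ) : ℤ) : ℝ) = ((n0 - 2 : ℤ) : ℝ) := by
          congr 1
          omega
        push_cast at h2c
        linarith
      rw [hcast]
      apply le_min _ hx2
      have hn0r : (2:ℝ) ≤ (n0:ℝ) := by exact_mod_cast hn02
      have hden : (0:ℝ) < (n0:ℝ) - 2 + 2 - a := by linarith
      rw [le_div_iff₀ hden]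
      have h1x : (n0:ℝ) - a ≤ 1/x := by linarith
      calc x * ((n0:ℝ) - 2 + 2 - a) = x * ((n0:ℝ) - a) := by ring
      _ ≤ x * (1/x) := mul_le_mul_of_nonneg_left h1x hx0
      _ = 1 := by field_simp
  · rintro (h | ⟨n, hn1, hn2⟩)
    · subst h
      refine ⟨by unfold foldedNICF; simp [ha0], le_refl 0, by norm_num⟩
    · have hnn : (0:ℝ) ≤ n := Nat.cast_nonneg n
      have hd1 : (0:ℝ) < (n:ℝ) + 2 + a := by linarith
      have hd2 : (0:ℝ) < (n:ℝ) + 2 - a := by linarith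
      have hxpos : 0 < x := lt_of_lt_of_le (by positivity) hn1
      have hx2 : x ≤ 1/2 := le_trans hn2 (min_le_right _ _)
      have hxu : x ≤ 1/((n:ℝ)+2-a) := le_trans hn2 (min_le_left _ _)
      have hyl : (n:ℝ) + 2 - a ≤ 1/x := by
        rw [le_div_iff₀ hxpos]
        have := mul_le_mul_of_nonneg_left hxu hd2.le
        rw [mul_one_div, div_self hd2.ne'] at this
        exact this
      have hyu : 1/x ≤ (n:ℝ) + 2 + a := by
        rw [div_le_iff₀ hxpos]
        have := mul_le_mul_of_nonneg_left hn1 hd1.le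
        rw [mul_one_div, div_self hd1.ne'] at this
        linarith
      have hfl : ⌊1/x + 1/2⌋ = (n:ℤ) + 2 := by
        apply Int.floor_eq_iff.mpr
        constructor
        · push_cast; linarith
        · push_cast; linarith
      refine ⟨?_, hxpos.le, hx2⟩
      unfold foldedNICF
      rw [if_neg (ne_of_gt hxpos), hfl, abs_le]
      constructor <;> push_cast <;> linarith
end


section
variable {a : ℝ} (ha0 : 0 ≤ a) (ha : a < 1/2)
include ha0 ha

lemma Sset_disj : Pairwise (Function.onFun Disjoint (Sset a)) := by
  have key : ∀ i j : ℕ, i < j → Disjoint (Sset a i) (Sset a j) := by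
    intro i j hij
    rw [Set.disjoint_left]
    intro x hxi hxj
    have hi : (0:ℝ) ≤ i := Nat.cast_nonneg i
    have hij' : (i:ℝ) + 1 ≤ j := by exact_mod_cast hij
    have hd1 : (0:ℝ) < (i:ℝ) + 2 + a := by linarith
    have hd2 : (0:ℝ) < (j:ℝ) + 2 - a := by linarith
    have h1 : 1/((i:ℝ)+2+a) ≤ x := hxi.1
    have h2 : x ≤ 1/((j:ℝ)+2-a) := le_trans hxj.2 (min_le_left _ _)
    have hlt : 1/((j:ℝ)+2-a) < 1/((i:ℝ)+2+a) := by
      apply one_div_lt_one_div_of_lt hd1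
      linarith
    linarith
  intro i j hij
  rcases lt_or_gt_of_ne hij with h | h
  · exact key i j h
  · exact (key j i h).symm

lemma Sset_measure (n : ℕ) :
    nicfMeasure (Sset a n) = ENNReal.ofReal (cseq a n / Real.log Gr) := by
  have hn : (0:ℝ) ≤ n := Nat.cast_nonneg n
  have h2 : (0:ℝ) < (n:ℝ) + 2 + a := by linarith
  have hu1 : 1/((n:ℝ)+2+a) ≤ 1/((n:ℝ)+2-a) :=
    one_div_le_one_div_of_le (by linarith) (by linarith)
  have hu2 : 1/((n:ℝ)+2+a) ≤ 1/2 := by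
    rw [div_le_div_iff₀ h2 (by norm_num)]; linarith
  unfold Sset cseq
  rw [nicf_Icc (by positivity) (le_min hu1 hu2) (min_le_right _ _)]

lemma nu_Iic : nicfMeasure (foldedNICF ⁻¹' (Iic a)) =
    ENNReal.ofReal ((Hf a - Hf 0) / Real.log Gr) := by
  have hpre : MeasurableSet (foldedNICF ⁻¹' (Iic a)) :=
    foldedNICF_measurable measurableSet_Iic
  rw [nicf_inter hpre, Sset_decomp ha0 ha]
  have hSm : ∀ n, MeasurableSet (Sset a n) := fun n => measurableSet_Icc
  have hdisj0 : Disjoint ({(0:ℝ)} : Set ℝ) (⋃ n, Sset a n) := by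
    rw [Set.disjoint_left]
    rintro x hx hx2
    rw [mem_singleton_iff] at hx
    subst hx
    rw [mem_iUnion] at hx2
    obtain ⟨n, hn⟩ := hx2
    have hn1 := hn.1
    have hnn : (0:ℝ) ≤ n := Nat.cast_nonneg n
    have : (0:ℝ) < 1/((n:ℝ)+2+a) := by positivity
    linarith
  rw [measure_union hdisj0 (MeasurableSet.iUnion hSm), nicf_singleton, zero_add,
    measure_iUnion (Sset_disj ha0 ha) hSm]
  have hterm : ∀ n, nicfMeasure (Sset a n) = ENNReal.ofReal (cseq a n / Real.log Gr) :=
    Sset_measure ha0 ha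
  rw [tsum_congr hterm]
  have hnonneg : ∀ n, 0 ≤ cseq a n / Real.log Gr :=
    fun n => div_nonneg (cseq_nonneg ha0 ha n) logGr_pos.le
  have hsummable : Summable (fun n => cseq a n / Real.log Gr) :=
    (cseq_hasSum ha0 ha).summable.div_const _
  rw [← ENNReal.ofReal_tsum_of_nonneg hnonneg hsummable]
  congr 1
  rw [tsum_div_const, (cseq_hasSum ha0 ha).tsum_eq, Hf_zero]
  ring_nf

lemma mu_Iic : nicfMeasure (Iic a) = ENNReal.ofReal ((Hf a - Hf 0) / Real.log Gr) := by
  rw [nicf_inter measurableSet_Iic]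
  have : Iic a ∩ Icc (0:ℝ) (1/2) = Icc 0 a := by
    ext x
    simp only [mem_inter_iff, mem_Iic, mem_Icc]
    constructor
    · rintro ⟨h1, h2, h3⟩; exact ⟨h2, h1⟩
    · rintro ⟨h1, h2⟩; exact ⟨h2, h1, by linarith⟩
  rw [this, nicf_Icc le_rfl ha0 (by linarith)]

end

lemma key_Iic (a : ℝ) :
    nicfMeasure (foldedNICF ⁻¹' (Iic a)) = nicfMeasure (Iic a) := by
  rcases lt_or_ge a 0 with h | h
  · have h1 : foldedNICF ⁻¹' (Iic a) ∩ Icc (0:ℝ) (1/2) = ∅ := by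
      rw [Set.eq_empty_iff_forall_notMem]
      rintro x ⟨hx1, _⟩
      rw [mem_preimage, mem_Iic] at hx1
      linarith [foldedNICF_nonneg x]
    have h2 : Iic a ∩ Icc (0:ℝ) (1/2) = ∅ := by
      rw [Set.eq_empty_iff_forall_notMem]
      rintro x ⟨hx1, hx2, _⟩
      rw [mem_Iic] at hx1
      linarith
    rw [nicf_inter (foldedNICF_measurable measurableSet_Iic), h1,
      nicf_inter measurableSet_Iic, h2]
  rcases lt_or_ge a (1/2) with h' | h'
  · rw [nu_Iic h h', mu_Iic h h']
  · have h1 : foldedNICF ⁻¹' (Iic a) ∩ Icc (0:ℝ) (1/2) = Icc 0 (1/2) := by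
      apply inter_eq_self_of_subset_right
      intro x hx
      rw [mem_preimage, mem_Iic]
      linarith [foldedNICF_le x]
    have h2 : Iic a ∩ Icc (0:ℝ) (1/2) = Icc 0 (1/2) := by
      apply inter_eq_self_of_subset_right
      intro x hx
      rw [mem_Iic]
      linarith [hx.2]
    rw [nicf_inter (foldedNICF_measurable measurableSet_Iic), h1,
      nicf_inter measurableSet_Iic, h2]

instance : IsFiniteMeasure nicfMeasure := by
  constructor
  rw [nicf_inter MeasurableSet.univ, Set.univ_inter, nicf_Icc le_rfl (by norm_num) le_rfl]
  exact ENNReal.ofReal_lt_top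

theorem nicfMeasure_invariant :
    ∀ E ⊆ Set.Icc (0 : ℝ) (1 / 2), MeasurableSet E →
      nicfMeasure (foldedNICF ⁻¹' E) = nicfMeasure E := by
  intro E _ hEm
  have hmap : nicfMeasure = nicfMeasure.map foldedNICF := by
    apply Measure.ext_of_Iic
    intro b
    rw [Measure.map_apply foldedNICF_measurable measurableSet_Iic]
    exact (key_Iic b).symm
  calc nicfMeasure (foldedNICF ⁻¹' E)
      = nicfMeasure.map foldedNICF E := (Measure.map_apply foldedNICF_measurable hEm).symm
    _ = nicfMeasure E := by rw [← hmap]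
end

section
/- Let G = (√5+1)/2 and H(y) = (G+y)(G+1-y)/G³ on [0,1/2]. For (k,e) with k ≥ 2 an integer and e ∈ {±1}, define P_{(k,e)}(y) = H(y)(1/(k+G-2+ey) - 1/(k+G-1+ey)). Then for all y ∈ [0,1/2], (1-2y)/(4(G+y)(G+1-y)) + ((G+y)(G+1-y)/(4G³))·(1/(G+y)² + 1/(G+1-y)²) < 0.191. -/
theorem S_II_bound (y : ℝ) (hy : y ∈ Set.Icc (0 : ℝ) (1 / 2)) :
    let G : ℝ := (Real.sqrt 5 + 1) / 2
    (1 - 2 * y) / (4 * (G + y) * (G + 1 - y))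
      + (G + y) * (G + 1 - y) / (4 * G ^ 3)
        * (1 / (G + y) ^ 2 + 1 / (G + 1 - y) ^ 2) < 0.191 := by
  obtain ⟨hy0, hy1⟩ := hy
  intro G
  have hs2 : Real.sqrt 5 ^ 2 = 5 := Real.sq_sqrt (by norm_num)
  have hsl : (2.236 : ℝ) < Real.sqrt 5 := by nlinarith [Real.sqrt_nonneg 5]
  have hsu : Real.sqrt 5 < 2.2361 := by nlinarith [Real.sqrt_nonneg 5]
  have hG : G = (Real.sqrt 5 + 1) / 2 := rfl
  have hG2 : G ^ 2 = G + 1 := by rw [hG]; nlinarith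
  have hGl : (1.618 : ℝ) < G := by rw [hG]; linarith
  have hGu : G < 1.61805 := by rw [hG]; linarith
  have hG3 : G ^ 3 = 2 * G + 1 := by nlinarith [hG2]
  have hGpos : (0:ℝ) < G := by linarith
  have ha : (0:ℝ) < G + y := by linarith
  have hb : (0:ℝ) < G + 1 - y := by linarith
  have hrw : (1 - 2 * y) / (4 * (G + y) * (G + 1 - y))
      + (G + y) * (G + 1 - y) / (4 * G ^ 3)
        * (1 / (G + y) ^ 2 + 1 / (G + 1 - y) ^ 2)
      = (G ^ 3 * (1 - 2 * y) + ((G + y) ^ 2 + (G + 1 - y) ^ 2))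
        / (4 * G ^ 3 * ((G + y) * (G + 1 - y))) := by
    field_simp
    ring
  rw [hrw, div_lt_iff₀ (by positivity)]
  have hyy : y ^ 2 ≤ y / 2 := by nlinarith [mul_nonneg hy0 (by linarith : (0:ℝ) ≤ 1/2 - y)]
  nlinarith [hG3, hG2, mul_nonneg hy0 (by linarith : (0:ℝ) ≤ 1/2 - y),
    mul_nonneg hy0 hGpos.le, mul_nonneg (mul_nonneg hy0 hGpos.le) hGpos.le,
    mul_le_mul_of_nonneg_right hGu.le hy0]
end

section
/- Let G = (√5+1)/2 and define for integers k ≥ 2 and x ∈ [0,1]: A_k(x) = (G+x)/(G(k+x)(k+x+G-1)) and B_k(x) = (G+x)/((G+1)(k+x)(k+x+G-2)). Then ∑_{k=2}^∞ (A_k(x) + B_k(x)) = 1 for every x ∈ [0,1]. -/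
theorem sum_Ak_Bk_eq_one (x : ℝ) (hx : x ∈ Set.Icc (0 : ℝ) 1) :
    let G : ℝ := (Real.sqrt 5 + 1) / 2
    let A : ℕ → ℝ := fun k => (G + x) / (G * (k + x) * (k + x + G - 1))
    let B : ℕ → ℝ := fun k => (G + x) / ((G + 1) * (k + x) * (k + x + G - 2))
    HasSum (fun k : ℕ => A (k + 2) + B (k + 2)) 1 := by
  intro G A B
  obtain ⟨hx0, hx1⟩ := hx
  have hs : Real.sqrt 5 ^ 2 = 5 := Real.sq_sqrt (by norm_num)
  have hs2 : (2:ℝ) < Real.sqrt 5 := by nlinarith [Real.sqrt_nonneg 5]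
  have hG1 : (1:ℝ) < G := by show (1:ℝ) < (Real.sqrt 5 + 1) / 2; linarith
  have hG2 : G ^ 2 = G + 1 := by
    show ((Real.sqrt 5 + 1) / 2) ^ 2 = (Real.sqrt 5 + 1) / 2 + 1; nlinarith
  clear_value G
  clear hs hs2
  set f : ℕ → ℝ := fun n => (G + x) / (n + x + G) with hf
  have key : ∀ n : ℕ, A (n + 2) + B (n + 2) = f n - f (n + 1) := by
    intro n
    have hn : (0:ℝ) ≤ n := Nat.cast_nonneg n
    have h1 : ((n:ℝ) + 2 + x) ≠ 0 := by positivity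
    have h2 : ((n:ℝ) + 2 + x + G - 1) ≠ 0 := by nlinarith
    have h3 : ((n:ℝ) + 2 + x + G - 2) ≠ 0 := by nlinarith
    have h4 : ((n:ℝ) + x + G) ≠ 0 := by nlinarith
    have h5 : ((n:ℝ) + 1 + x + G) ≠ 0 := by nlinarith
    have hG0 : G ≠ 0 := by nlinarith
    have hG10 : G + 1 ≠ 0 := by nlinarith
    simp only [A, B, hf]
    push_cast
    rw [div_add_div _ _ (mul_ne_zero (mul_ne_zero hG0 h1) h2)
        (mul_ne_zero (mul_ne_zero hG10 h1) h3),
      div_sub_div _ _ h4 h5,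
      div_eq_div_iff
        (mul_ne_zero (mul_ne_zero (mul_ne_zero hG0 h1) h2)
          (mul_ne_zero (mul_ne_zero hG10 h1) h3))
        (mul_ne_zero h4 h5)]
    linear_combination (-(G + x) * ((n:ℝ) + x) * ((n:ℝ) + 2 + x) *
      (((n:ℝ) + x + G) * ((n:ℝ) + 1 + x + G))) * hG2
  have hnonneg : ∀ n : ℕ, 0 ≤ A (n + 2) + B (n + 2) := by
    intro n
    rw [key n]
    have hn : (0:ℝ) ≤ n := Nat.cast_nonneg n
    have : f (n + 1) ≤ f n := by
      simp only [hf]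
      push_cast
      have hp : (0:ℝ) < (n:ℝ) + x + G := by nlinarith
      apply div_le_div_of_nonneg_left (by linarith) hp
      linarith
    linarith
  rw [hasSum_iff_tendsto_nat_of_nonneg hnonneg]
  have hsum : ∀ n : ℕ, ∑ i ∈ Finset.range n, (A (i + 2) + B (i + 2)) = f 0 - f n := by
    intro n
    rw [Finset.sum_congr rfl fun i _ => key i, Finset.sum_range_sub' f n]
  simp only [hsum]
  have hf0 : f 0 = 1 := by
    simp only [hf]
    rw [Nat.cast_zero, zero_add, add_comm x G, div_self (by nlinarith)]
  have hlim : Filter.Tendsto f Filter.atTop (nhds 0) := by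
    simp only [hf]
    apply Filter.Tendsto.div_atTop (tendsto_const_nhds)
    apply Filter.tendsto_atTop_add_const_right
    exact Filter.tendsto_atTop_add_const_right _ x tendsto_natCast_atTop_atTop
  rw [hf0]
  have := Filter.Tendsto.const_sub (1:ℝ) hlim
  simpa using this
end

section
/- Let G = (√5+1)/2, T̃_e : [0,1] → [0,1] the unfolded even NICF map (which coincides with the Gauss map x ↦ 1/x - ⌊1/x⌋ on (0,1/2] and satisfies T̃_e(y) = T̃_e(1-y) for y ∈ (1/2,1)), and h̃_e(x) = 1/((G+x) log G). Then the probability measure μ̃_e with density h̃_e is T̃_e-invariant; equivalently, for every y ∈ [0,1], ∑_{k=2}^∞ (h̃_e(1/(y+k)) + h̃_e(1 - 1/(y+k)))·1/(y+k)² = h̃_e(y). -/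
lemma transfer_aux (g a L : ℝ) (hg : g*g = g+1) (h2 : (2:ℝ) ≤ a) (hg1 : 1 < g) (hL : L ≠ 0) :
    (1/((g + 1/a)*L) + 1/((g + (1 - 1/a))*L)) * (1/a^2)
      = 1/((g + (a-2))*L) - 1/((g + (a-1))*L) := by
  have ha : (0:ℝ) < a := by linarith
  have d1 : (g*a + 1) ≠ 0 := by nlinarith
  have d2 : ((g+1)*a - 1) ≠ 0 := by nlinarith
  have d3 : (g + (a-2)) ≠ 0 := by nlinarith
  have d4 : (g + (a-1)) ≠ 0 := by nlinarith
  have e1 : g + 1/a = (g*a+1)/a := by field_simp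
  have e2 : g + (1 - 1/a) = ((g+1)*a-1)/a := by field_simp; ring
  rw [e1, e2]
  field_simp [show a*(g+1)-1 ≠ 0 by rw [mul_comm]; exact d2]
  linear_combination (a*(2*g+4*a-3-a^2)) * hg

theorem transfer_fixed_point (y : ℝ) (hy : y ∈ Set.Icc (0 : ℝ) 1) :
    let G : ℝ := (Real.sqrt 5 + 1) / 2
    let he : ℝ → ℝ := fun x => 1 / ((G + x) * Real.log G)
    HasSum (fun k : ℕ =>
        (he (1 / (y + (k + 2))) + he (1 - 1 / (y + (k + 2)))) * (1 / (y + (k + 2)) ^ 2))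
      (he y) := by
  intro G he
  obtain ⟨hy0, hy1⟩ := hy
  have h5 : Real.sqrt 5 * Real.sqrt 5 = 5 := Real.mul_self_sqrt (by norm_num)
  have hs2 : 2 < Real.sqrt 5 := by nlinarith [Real.sqrt_nonneg 5]
  have hG1 : (1:ℝ) < G := show (1:ℝ) < (Real.sqrt 5 + 1)/2 by nlinarith
  have hg : G * G = G + 1 :=
    show ((Real.sqrt 5 + 1)/2) * ((Real.sqrt 5 + 1)/2) = (Real.sqrt 5 + 1)/2 + 1 by
      linear_combination h5/4
  have hL : 0 < Real.log G := Real.log_pos hG1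
  set L := Real.log G with hLdef
  set f : ℕ → ℝ := fun n => 1/((G + (y + n)) * L) with hf
  have key : ∀ k : ℕ,
      (he (1 / (y + (k + 2))) + he (1 - 1 / (y + (k + 2)))) * (1 / (y + (k + 2)) ^ 2)
        = f k - f (k+1) := by
    intro k
    have hk0 : (0:ℝ) ≤ (k:ℝ) := Nat.cast_nonneg k
    have h2 : (2:ℝ) ≤ y + ((k:ℝ) + 2) := by linarith
    have h := transfer_aux G (y + ((k:ℝ) + 2)) L hg h2 hG1 hL.ne'
    rw [show y + ((k:ℝ)+2) - 2 = y + (k:ℝ) by ring,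
        show y + ((k:ℝ)+2) - 1 = y + ((k:ℝ)+1) by ring] at h
    simp only [hf]
    push_cast
    exact h
  have hfk : ∀ k : ℕ, 0 < (G + (y + (k:ℝ))) * L := by
    intro k
    have hk0 : (0:ℝ) ≤ (k:ℝ) := Nat.cast_nonneg k
    have : (0:ℝ) < G + (y + (k:ℝ)) := by linarith
    exact mul_pos this hL
  have hey : he y = f 0 := by
    show 1/((G + y) * L) = 1/((G + (y + ((0:ℕ):ℝ))) * L)
    norm_num
  rw [hey]
  refine (hasSum_iff_tendsto_nat_of_nonneg ?_ _).mpr ?_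
  · intro k
    rw [key k, sub_nonneg]
    refine one_div_le_one_div_of_le (hfk k) ?_
    have : (G + (y + (k:ℝ))) ≤ (G + (y + ((k+1:ℕ):ℝ))) := by push_cast; linarith
    exact mul_le_mul_of_nonneg_right this hL.le
  · have hps : ∀ n : ℕ, (∑ i ∈ Finset.range n,
        (he (1 / (y + (i + 2))) + he (1 - 1 / (y + (i + 2)))) * (1 / (y + (i + 2)) ^ 2))
          = f 0 - f n := by
      intro n
      rw [Finset.sum_congr rfl (fun i _ => key i)]
      exact Finset.sum_range_sub' f n
    simp only [hps]
    have hft : Filter.Tendsto f Filter.atTop (nhds 0) := by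
      have h1 : Filter.Tendsto (fun n : ℕ => (G + (y + (n:ℝ))) * L) Filter.atTop Filter.atTop := by
        refine Filter.Tendsto.atTop_mul_const hL ?_
        exact Filter.tendsto_atTop_add_const_left _ _
          (Filter.tendsto_atTop_add_const_left _ _ tendsto_natCast_atTop_atTop)
      have := Filter.Tendsto.comp tendsto_inv_atTop_zero h1
      simpa only [hf, one_div, Function.comp_def] using this
    have := Filter.Tendsto.const_sub (f 0) hft
    simpa using this
end

section
/- Let G = (√5+1)/2 and define k(x) = (1/log G)·(1/(2+x) + 1/(2-x)) for x ∈ [0, g²) and k(x) = (1/log G)·1/(2+x) for x ∈ [g², g], where g = G - 1. Then ∫₀^g k(x) dx = 1, i.e., dν = k(x)dx is a probability measure on [0,g]. -/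
open MeasureTheory intervalIntegral

lemma hurwitz_aux (L t u : ℝ) (hL : L ≠ 0) :
    1 / L * (t - u + (u - L)) + 1 / L * (((2 : ℕ) : ℝ) * L - t) = 1 := by
  field_simp
  ring

theorem hurwitz_density_integral_eq_one :
    let G : ℝ := (Real.sqrt 5 + 1) / 2
    let g : ℝ := (Real.sqrt 5 - 1) / 2
    let k : ℝ → ℝ := fun x =>
      if x < g ^ 2 then (1 / Real.log G) * (1 / (2 + x) + 1 / (2 - x))
      else (1 / Real.log G) * (1 / (2 + x))
    ∫ x in (0 : ℝ)..g, k x = 1 := by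
  intro G g k
  have hs5 : Real.sqrt 5 ^ 2 = 5 := Real.sq_sqrt (by norm_num)
  have hs2 : (2:ℝ) < Real.sqrt 5 := by nlinarith [Real.sqrt_nonneg 5]
  have hs3 : Real.sqrt 5 < 3 := by nlinarith [Real.sqrt_nonneg 5]
  set s := Real.sqrt 5 with hs
  have hg2 : g ^ 2 = (3 - s) / 2 := by
    show ((s - 1)/2) ^ 2 = (3 - s)/2
    linear_combination hs5 / 4
  have hG1 : (1:ℝ) < G := by show (1:ℝ) < (s+1)/2; linarith
  have hGpos : (0:ℝ) < G := lt_trans one_pos hG1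
  have hlogG : Real.log G ≠ 0 := ne_of_gt (Real.log_pos hG1)
  have h1 : (0:ℝ) ≤ g ^ 2 := by rw [hg2]; linarith
  have h2 : g ^ 2 ≤ g := by show _ ≤ (s-1)/2; rw [hg2]; linarith
  have hgle : g ≤ 1 := by show (s-1)/2 ≤ 1; linarith
  -- basic integrability
  have ia : IntervalIntegrable (fun x => 1/(2+x)) volume 0 (g^2) := by
    apply ContinuousOn.intervalIntegrable
    refine ContinuousOn.div continuousOn_const (by fun_prop) (fun x hx => ?_)
    rw [Set.uIcc_of_le h1] at hx; linarith [hx.1]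
  have ib : IntervalIntegrable (fun x => 1/(2-x)) volume 0 (g^2) := by
    apply ContinuousOn.intervalIntegrable
    refine ContinuousOn.div continuousOn_const (by fun_prop) (fun x hx => ?_)
    rw [Set.uIcc_of_le h1] at hx
    have := hx.2; rw [hg2] at this; linarith
  have ic : IntervalIntegrable (fun x => 1/(2+x)) volume (g^2) g := by
    apply ContinuousOn.intervalIntegrable
    refine ContinuousOn.div continuousOn_const (by fun_prop) (fun x hx => ?_)
    rw [Set.uIcc_of_le h2] at hx; linarith [hx.1, h1]
  have c1 : IntervalIntegrable
      (fun x => (1 / Real.log G) * (1 / (2 + x) + 1 / (2 - x))) volume 0 (g^2) :=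
    (ia.add ib).const_mul _
  have c2 : IntervalIntegrable
      (fun x => (1 / Real.log G) * (1 / (2 + x))) volume (g^2) g :=
    ic.const_mul _
  have hae : ∀ᵐ x : ℝ, x ≠ g ^ 2 := by
    rw [MeasureTheory.ae_iff]
    have : {x : ℝ | ¬ x ≠ g ^ 2} = {g ^ 2} := by ext x; simp
    rw [this]; exact Real.volume_singleton
  have keq1 : ∀ᵐ x : ℝ, x ∈ Set.uIoc (0:ℝ) (g^2) →
      k x = (1 / Real.log G) * (1 / (2 + x) + 1 / (2 - x)) := by
    filter_upwards [hae] with x hx hxI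
    rw [Set.uIoc_of_le h1] at hxI
    have hlt : x < g ^ 2 := lt_of_le_of_ne hxI.2 hx
    simp only [k, if_pos hlt]
  have keq2 : Set.EqOn k (fun x => (1 / Real.log G) * (1 / (2 + x))) (Set.uIcc (g^2) g) := by
    intro x hx
    rw [Set.uIcc_of_le h2] at hx
    have : ¬ x < g ^ 2 := not_lt.mpr hx.1
    simp only [k, if_neg this]
  have hL : ∫ x in (0:ℝ)..(g^2), k x
      = ∫ x in (0:ℝ)..(g^2), (1 / Real.log G) * (1 / (2 + x) + 1 / (2 - x)) := by
    apply intervalIntegral.integral_congr_ae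
    filter_upwards [keq1] with x hx hxI using hx hxI
  have hR : ∫ x in (g^2:ℝ)..g, k x
      = ∫ x in (g^2:ℝ)..g, (1 / Real.log G) * (1 / (2 + x)) :=
    intervalIntegral.integral_congr keq2
  have ik1 : IntervalIntegrable k volume 0 (g^2) := by
    refine c1.congr_ae ?_
    exact (ae_restrict_iff' measurableSet_uIoc).mpr
      (by filter_upwards [keq1] with x hx hxI using (hx hxI).symm)
  have ik2 : IntervalIntegrable k volume (g^2) g := by
    refine c2.congr_ae ?_
    exact (ae_restrict_iff' measurableSet_uIoc).mpr
      (Filter.Eventually.of_forall fun x hxI =>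
        (keq2 (Set.uIoc_subset_uIcc hxI)).symm)
  have hsplit : ∫ x in (0:ℝ)..g, k x
      = (∫ x in (0:ℝ)..(g^2), k x) + ∫ x in (g^2:ℝ)..g, k x :=
    (intervalIntegral.integral_add_adjacent_intervals ik1 ik2).symm
  -- compute the three basic integrals
  have hA : ∫ x in (0:ℝ)..(g^2), 1 / (2 + x) = Real.log ((2 + g^2) / 2) := by
    rw [intervalIntegral.integral_comp_add_left (fun x => 1/x) 2,
      integral_one_div (by
        intro h
        rw [Set.uIcc_of_le (by linarith : (2:ℝ)+0 ≤ 2 + g^2)] at h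
        linarith [h.1])]
    norm_num
  have hB : ∫ x in (0:ℝ)..(g^2), 1 / (2 - x) = Real.log (2 / (2 - g^2)) := by
    rw [intervalIntegral.integral_comp_sub_left (fun x => 1/x) 2,
      integral_one_div (by
        intro h
        rw [Set.uIcc_of_le (by linarith : (2:ℝ) - g^2 ≤ 2 - 0)] at h
        have := h.1; rw [hg2] at this; linarith)]
    norm_num
  have hC : ∫ x in (g^2:ℝ)..g, 1 / (2 + x) = Real.log ((2 + g) / (2 + g^2)) := by
    rw [intervalIntegral.integral_comp_add_left (fun x => 1/x) 2,
      integral_one_div (by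
        intro h
        rw [Set.uIcc_of_le (by linarith : (2:ℝ) + g^2 ≤ 2 + g)] at h
        linarith [h.1, h1])]
  have p1 : (0:ℝ) < 2 + g ^ 2 := by rw [hg2]; linarith
  have key1 : 2 - g ^ 2 = G := by rw [hg2]; show _ = (s+1)/2; ring
  have key2 : 2 + g = G ^ 2 := by
    show 2 + (s-1)/2 = ((s+1)/2)^2
    linear_combination -hs5 / 4
  rw [hsplit, hL, hR, intervalIntegral.integral_const_mul,
    intervalIntegral.integral_const_mul, intervalIntegral.integral_add ia ib,
    hA, hB, hC, key1, key2,
    Real.log_div (ne_of_gt p1) (by norm_num : (2:ℝ) ≠ 0),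
    Real.log_div (by norm_num : (2:ℝ) ≠ 0) (ne_of_gt hGpos),
    Real.log_div (pow_ne_zero 2 (ne_of_gt hGpos)) (ne_of_gt p1),
    Real.log_pow]
  exact hurwitz_aux (Real.log G) (Real.log (2 + g^2)) (Real.log 2) hlogG
end
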